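/- Assume k ≥ 2 and ξ ∈ ℕ are such that every grounded family of curves G with ω(G) ≤ k−1 satisfies χ(G) ≤ ξ. Let F be a grounded family of curves with ω(F) ≤ k and let ((P₁,S₁),…,(Pₙ,Sₙ)) be an n-bracket system in F. If χ(P_i) > (n−1)ξ for every i with 1 ≤ i ≤ n, then there exist curves s_i ∈ S_i (1 ≤ i ≤ n) such that s₁, …, sₙ pairwise intersect, i.e., {s₁,…,sₙ} is a clique in the intersection graph of F. -/

import Mathlib

open Set

attribute [local instance] Classical.propDecidable

abbrev Pt : Type := ℝ × ℝ

/-- The closed upper halfplane. -/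
def upperH : Set Pt := {p | 0 ≤ p.2}

/-- A curve: image of a continuous map from `[0,1]` to the plane. -/
def IsCurve (c : Set Pt) : Prop :=
  ∃ f : ℝ → Pt, ContinuousOn f (Set.Icc 0 1) ∧ f '' Set.Icc 0 1 = c

/-- A grounded curve: contained in the upper halfplane, meeting the baseline in exactly
one point which is an endpoint of the curve. -/
def IsGroundedCurve (c : Set Pt) : Prop :=
  (∃ f : ℝ → Pt, ContinuousOn f (Set.Icc 0 1) ∧ f '' Set.Icc 0 1 = c ∧ (f 0).2 = 0) ∧
  c ⊆ upperH ∧ (∃! p : Pt, p ∈ c ∧ p.2 = 0)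

/-- The (unique) point of a grounded curve on the baseline. -/
noncomputable def basepoint (c : Set Pt) : Pt :=
  if h : ∃ p : Pt, p ∈ c ∧ p.2 = 0 then h.choose else (0, 0)

/-- A grounded family of curves. -/
def IsGrounded (F : Set (Set Pt)) : Prop :=
  F.Finite ∧ (∀ c ∈ F, IsGroundedCurve c) ∧
  ∀ c ∈ F, ∀ d ∈ F, c ≠ d → basepoint c ≠ basepoint d

/-- `prec u v` : the basepoint of `u` lies to the left of that of `v`. -/
def prec (u v : Set Pt) : Prop := (basepoint u).1 < (basepoint v).1

/-- `F(u,v)`: the curves of `F` between `u` and `v`. -/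
def between (F : Set (Set Pt)) (u v : Set Pt) : Set (Set Pt) :=
  {c | c ∈ F ∧ prec u c ∧ prec c v}

/-- A proper coloring of the intersection graph of `F` with `m` colors. -/
def Colorable (F : Set (Set Pt)) (m : ℕ) : Prop :=
  ∃ φ : Set Pt → ℕ, (∀ c ∈ F, φ c < m) ∧
    ∀ c ∈ F, ∀ d ∈ F, c ≠ d → (c ∩ d).Nonempty → φ c ≠ φ d

/-- Chromatic number of the intersection graph of `F`. -/
noncomputable def chi (F : Set (Set Pt)) : ℕ := sInf {m | Colorable F m}

/-- `ω(F) ≤ k`: every clique (set of pairwise intersecting members) has at most `k` members. -/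
def cliqueLE (F : Set (Set Pt)) (k : ℕ) : Prop :=
  ∀ K : Finset (Set Pt), ↑K ⊆ F →
    (∀ c ∈ K, ∀ d ∈ K, c ≠ d → (c ∩ d).Nonempty) → K.card ≤ k

/-- Points of `upperH \ W` whose path-component in `upperH \ W` is unbounded. -/
def extOf (W : Set Pt) : Set Pt :=
  {x | x ∈ upperH \ W ∧ ¬ Bornology.IsBounded (pathComponentIn (upperH \ W) x)}

/-- The exterior of a family of curves. -/
def extFam (F : Set (Set Pt)) : Set Pt := extOf (⋃₀ F)

/-- A chosen parametrization of a grounded curve by `[0,1]` starting at its basepoint. -/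
noncomputable def param (c : Set Pt) : ℝ → Pt :=
  if h : ∃ f : ℝ → Pt, ContinuousOn f (Set.Icc 0 1) ∧ f '' Set.Icc 0 1 = c ∧ f 0 = basepoint c
  then h.choose else fun _ => (0, 0)

/-- `t₀ = inf {t : c(t) ∈ A}` for the chosen parametrization of `c`. -/
noncomputable def firstTime (c A : Set Pt) : ℝ :=
  sInf {t | t ∈ Set.Icc (0:ℝ) 1 ∧ param c t ∈ A}

/-- The first point of `c` on `A`. -/
noncomputable def firstPoint (c A : Set Pt) : Pt := param c (firstTime c A)

/-- The portion of `c` from its basepoint up to and including its first point on `A`. -/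
noncomputable def portionTo (c A : Set Pt) : Set Pt :=
  param c '' Set.Icc 0 (firstTime c A)

/-- The portion of `c` from its basepoint strictly before its first point on `A`. -/
noncomputable def portionBefore (c A : Set Pt) : Set Pt :=
  param c '' Set.Ico 0 (firstTime c A)

/-- The initial portion of `c` up to `A`; all of `c` if `c` is disjoint from `A`. -/
noncomputable def initialPortion (c A : Set Pt) : Set Pt :=
  if (c ∩ A).Nonempty then portionTo c A else c

/-- A skeleton `(u,v,S)` in `F`. -/
def IsSkeleton (F : Set (Set Pt)) (u v : Set Pt) (S : Set (Set Pt)) : Prop :=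
  u ∈ F ∧ v ∈ F ∧ prec u v ∧ (u ∩ v).Nonempty ∧ S ⊆ between F u v ∧
  ∀ s ∈ S, ∀ s' ∈ S, s ≠ s' → s ∩ s' = ∅

/-- `P` is supported by the skeleton `(u,v,S)`. -/
def SupportedBy (F : Set (Set Pt)) (u v : Set Pt) (S P : Set (Set Pt)) : Prop :=
  P ⊆ between F u v ∧
  (∀ p ∈ P, p ∩ u = ∅ ∧ p ∩ v = ∅) ∧
  ∀ p ∈ P, ∃ s ∈ S, (p ∩ initialPortion s (u ∪ v)).Nonempty

/-- The data of a bracket: the families `P`, `S` and the selection `p ↦ s(p)`. -/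
structure CBracket where
  P : Set (Set Pt)
  S : Set (Set Pt)
  sel : Set Pt → Set Pt

/-- `(P,S)` (with selection `sel`) is a bracket in `F`. -/
def IsCBracket (F : Set (Set Pt)) (B : CBracket) : Prop :=
  B.P ⊆ F ∧ B.S ⊆ F ∧
  ((∀ p ∈ B.P, ∀ s ∈ B.S, prec p s) ∨ (∀ p ∈ B.P, ∀ s ∈ B.S, prec s p)) ∧
  (∀ p ∈ B.P, ∃ s ∈ B.S, (p ∩ s).Nonempty) ∧
  (∀ p ∈ B.P, B.sel p ∈ B.S ∧ firstPoint p (⋃₀ B.S) ∈ B.sel p) ∧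
  ∀ s ∈ B.S, ∃ p ∈ B.P, firstPoint p (⋃₀ B.S) ∈ s

/-- `I(p)`: points of `upperH` not in any unbounded path-component of
`upperH \ (p' ∪ s(p) ∪ B(p))`. -/
noncomputable def CBracket.regionOf (B : CBracket) (p : Set Pt) : Set Pt :=
  upperH \ extOf (portionBefore p (⋃₀ B.S) ∪ B.sel p ∪
    segment ℝ (basepoint p) (basepoint (B.sel p)))

/-- The interior `I` of a bracket. -/
noncomputable def CBracket.inter (B : CBracket) : Set Pt := ⋂ p ∈ B.P, B.regionOf p

/-- The exterior `E` of a bracket. -/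
def CBracket.exter (B : CBracket) : Set Pt := extOf (⋃₀ (B.P ∪ B.S))

/-- An `n`-bracket system in `F`. -/
def IsCBracketSystem (F : Set (Set Pt)) {n : ℕ} (B : Fin n → CBracket) : Prop :=
  (∀ i, IsCBracket F (B i)) ∧
  (∀ i, ∀ p ∈ (B i).P, ∀ j, i < j → p ⊆ (B j).inter) ∧
  ∀ i, ∀ s ∈ (B i).S, (s ∩ ⋂ j ∈ {j | i < j}, (B j).exter).Nonempty

/-- A clique in `F` (a finite set of pairwise intersecting curves of `F`). -/
def IsCliqueIn (F : Set (Set Pt)) (K : Finset (Set Pt)) : Prop :=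
  ↑K ⊆ F ∧ ∀ c ∈ K, ∀ d ∈ K, c ≠ d → (c ∩ d).Nonempty

/-- `ℓ(K)`: the curve of `K` with leftmost basepoint. -/
noncomputable def lcur (K : Finset (Set Pt)) : Set Pt :=
  if h : ∃ c ∈ K, ∀ d ∈ K, d ≠ c → prec c d then h.choose else ∅

/-- `r(K)`: the curve of `K` with second leftmost basepoint. -/
noncomputable def rcur (K : Finset (Set Pt)) : Set Pt :=
  if h : ∃ c ∈ K, c ≠ lcur K ∧ ∀ d ∈ K, d ≠ c → d ≠ lcur K → prec c d
  then h.choose else ∅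

/-- `ℓ'(K)`: portion of `ℓ(K)` up to and including its first point on `r(K)`. -/
noncomputable def lport (K : Finset (Set Pt)) : Set Pt := portionTo (lcur K) (rcur K)

/-- `r'(K)`: portion of `r(K)` strictly before its first point on `ℓ'(K)`. -/
noncomputable def rport (K : Finset (Set Pt)) : Set Pt := portionBefore (rcur K) (lport K)

/-- `s` is left for `K`. -/
def leftFor (K : Finset (Set Pt)) (s : Set Pt) : Prop :=
  (s ∩ lport K).Nonempty ∧ portionTo s (lport K) ∩ rport K = ∅

/-- `s` is right for `K`. -/
def rightFor (K : Finset (Set Pt)) (s : Set Pt) : Prop :=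
  (s ∩ rport K).Nonempty ∧ portionTo s (rport K) ∩ lport K = ∅

/-- A `(k₁,…,kₙ)`-clique system in `F`. -/
def IsCliqueSystem (F : Set (Set Pt)) {n : ℕ} (ks : Fin n → ℕ)
    (K : Fin n → Finset (Set Pt)) : Prop :=
  (∀ i, IsCliqueIn F (K i) ∧ (K i).card = ks i) ∧
  ∀ i j : Fin n, i < j →
    ↑(K j) ⊆ between F (lcur (K i)) (rcur (K i)) ∧
    (∀ s ∈ K j, (s ∩ (lport (K i) ∪ rport (K i))).Nonempty) ∧
    ((∀ s ∈ K j, leftFor (K i) s) ∨ (∀ s ∈ K j, rightFor (K i) s))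

/-- `s` crosses the clique system `K`. -/
def Crosses (F : Set (Set Pt)) {n : ℕ} (K : Fin (n+1) → Finset (Set Pt)) (s : Set Pt) : Prop :=
  s ∈ between F (lcur (K (Fin.last n))) (rcur (K (Fin.last n))) ∧
  (s ∩ extOf (⋃ i, ⋃₀ (↑(K i) : Set (Set Pt)))).Nonempty


/-! ### Auxiliary lemmas -/

open Metric Bornology

lemma bsc_basepoint_spec {c : Set Pt} (hc : IsGroundedCurve c) :
    basepoint c ∈ c ∧ (basepoint c).2 = 0 := by
  obtain ⟨⟨f, hf, hfi, hf0⟩, _hsub, _hex⟩ := hc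
  have h : ∃ p : Pt, p ∈ c ∧ p.2 = 0 :=
    ⟨f 0, by rw [← hfi]; exact ⟨0, Set.mem_Icc.2 ⟨le_refl 0, zero_le_one⟩, rfl⟩, hf0⟩
  rw [basepoint, dif_pos h]
  exact h.choose_spec

lemma bsc_basepoint_unique {c : Set Pt} (hc : IsGroundedCurve c) {w : Pt}
    (hw : w ∈ c) (hw2 : w.2 = 0) : w = basepoint c := by
  obtain ⟨p, _hp, hup⟩ := hc.2.2
  have h1 := hup w ⟨hw, hw2⟩
  have h2 := hup (basepoint c) ⟨(bsc_basepoint_spec hc).1, (bsc_basepoint_spec hc).2⟩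
  rw [h1, h2]

lemma bsc_param_spec {c : Set Pt} (hc : IsGroundedCurve c) :
    ContinuousOn (param c) (Set.Icc 0 1) ∧ param c '' Set.Icc 0 1 = c ∧
      param c 0 = basepoint c := by
  obtain ⟨⟨f, hf, hfi, hf0⟩, hsub, hex⟩ := hc
  have hfmem : f 0 ∈ c := by
    rw [← hfi]; exact ⟨0, Set.mem_Icc.2 ⟨le_refl 0, zero_le_one⟩, rfl⟩
  have hbp : f 0 = basepoint c :=
    bsc_basepoint_unique ⟨⟨f, hf, hfi, hf0⟩, hsub, hex⟩ hfmem hf0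
  have h : ∃ f : ℝ → Pt, ContinuousOn f (Set.Icc 0 1) ∧ f '' Set.Icc 0 1 = c ∧
      f 0 = basepoint c := ⟨f, hf, hfi, hbp⟩
  rw [param, dif_pos h]
  exact h.choose_spec

lemma bsc_curve_compact {c : Set Pt} (hc : IsGroundedCurve c) : IsCompact c := by
  obtain ⟨hcont, himg, _⟩ := bsc_param_spec hc
  rw [← himg]; exact isCompact_Icc.image_of_continuousOn hcont

lemma bsc_sUnion_closed {F S : Set (Set Pt)} (hF : IsGrounded F) (hS : S ⊆ F) :
    IsClosed (⋃₀ S) := by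
  have hfin : S.Finite := hF.1.subset hS
  rw [Set.sUnion_eq_biUnion]
  exact hfin.isClosed_biUnion (fun c hcS => (bsc_curve_compact (hF.2.1 c (hS hcS))).isClosed)

lemma bsc_firstTime_spec {c : Set Pt} (hc : IsGroundedCurve c) {D : Set Pt} (hD : IsClosed D)
    (hne : (c ∩ D).Nonempty) :
    firstTime c D ∈ Set.Icc (0:ℝ) 1 ∧ param c (firstTime c D) ∈ D := by
  obtain ⟨hcont, himg, _h0⟩ := bsc_param_spec hc
  have hset : {t | t ∈ Set.Icc (0:ℝ) 1 ∧ param c t ∈ D}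
      = Set.Icc (0:ℝ) 1 ∩ param c ⁻¹' D := by ext u; exact Iff.rfl
  have hTne : {t | t ∈ Set.Icc (0:ℝ) 1 ∧ param c t ∈ D}.Nonempty := by
    obtain ⟨w, hwc, hwD⟩ := hne
    rw [← himg] at hwc; obtain ⟨u, hu, rfl⟩ := hwc
    exact ⟨u, hu, hwD⟩
  have hTclosed : IsClosed {t | t ∈ Set.Icc (0:ℝ) 1 ∧ param c t ∈ D} := by
    rw [hset]
    exact hcont.preimage_isClosed_of_isClosed isClosed_Icc hD
  have hbdd : BddBelow {t | t ∈ Set.Icc (0:ℝ) 1 ∧ param c t ∈ D} :=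
    ⟨0, fun u hu => hu.1.1⟩
  have hmem := hTclosed.csInf_mem hTne hbdd
  exact ⟨hmem.1, hmem.2⟩

lemma bsc_firstPoint_mem {c : Set Pt} (hc : IsGroundedCurve c) {D : Set Pt} (hD : IsClosed D)
    (hne : (c ∩ D).Nonempty) : firstPoint c D ∈ c := by
  obtain ⟨hT, _⟩ := bsc_firstTime_spec hc hD hne
  obtain ⟨_, himg, _⟩ := bsc_param_spec hc
  have := Set.mem_image_of_mem (param c) hT
  rw [himg] at this
  exact this

lemma bsc_grounded_subset {F G : Set (Set Pt)} (hF : IsGrounded F) (h : G ⊆ F) :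
    IsGrounded G :=
  ⟨hF.1.subset h, fun c hc => hF.2.1 c (h hc), fun c hc d hd => hF.2.2 c (h hc) d (h hd)⟩

/-! ### Coloring lemmas -/

lemma bsc_colorable_mono {A : Set (Set Pt)} {m m' : ℕ} (h : Colorable A m) (hm : m ≤ m') :
    Colorable A m' := by
  obtain ⟨φ, h1, h2⟩ := h
  exact ⟨φ, fun c hc => lt_of_lt_of_le (h1 c hc) hm, h2⟩

lemma bsc_colorable_subset {A B : Set (Set Pt)} {m : ℕ} (h : Colorable B m) (hAB : A ⊆ B) :
    Colorable A m := by
  obtain ⟨φ, h1, h2⟩ := h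
  exact ⟨φ, fun c hc => h1 c (hAB hc), fun c hc d hd => h2 c (hAB hc) d (hAB hd)⟩

lemma bsc_colorable_of_finite {A : Set (Set Pt)} (hA : A.Finite) : ∃ m, Colorable A m := by
  classical
  refine ⟨hA.toFinset.card,
    fun c => if h : c ∈ hA.toFinset then (hA.toFinset.equivFin ⟨c, h⟩ : ℕ) else 0, ?_, ?_⟩
  · intro c hc
    have h : c ∈ hA.toFinset := hA.mem_toFinset.2 hc
    simp only [dif_pos h]
    exact (hA.toFinset.equivFin ⟨c, h⟩).isLt
  · intro c hc d hd hne _hint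
    have h1 : c ∈ hA.toFinset := hA.mem_toFinset.2 hc
    have h2 : d ∈ hA.toFinset := hA.mem_toFinset.2 hd
    simp only [dif_pos h1, dif_pos h2]
    intro heq
    apply hne
    have := (hA.toFinset.equivFin).injective (Fin.ext heq)
    exact congrArg Subtype.val this

lemma bsc_colorable_of_chi_le {A : Set (Set Pt)} (hA : A.Finite) {m : ℕ} (h : chi A ≤ m) :
    Colorable A m := by
  have hne : {m | Colorable A m}.Nonempty := bsc_colorable_of_finite hA
  have hmem : Colorable A (chi A) := Nat.sInf_mem hne
  exact bsc_colorable_mono hmem h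

lemma bsc_chi_le_of_colorable {A : Set (Set Pt)} {m : ℕ} (h : Colorable A m) : chi A ≤ m :=
  Nat.sInf_le h

lemma bsc_colorable_union {A B : Set (Set Pt)} {m₁ m₂ : ℕ}
    (hA : Colorable A m₁) (hB : Colorable B m₂) : Colorable (A ∪ B) (m₁ + m₂) := by
  classical
  obtain ⟨φ, hφb, hφp⟩ := hA
  obtain ⟨ψ, hψb, hψp⟩ := hB
  refine ⟨fun c => if c ∈ A then φ c else m₁ + ψ c, ?_, ?_⟩
  · intro c hc
    by_cases h : c ∈ A
    · simp only [if_pos h]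
      exact lt_of_lt_of_le (hφb c h) (Nat.le_add_right _ _)
    · have hcB : c ∈ B := hc.resolve_left h
      simp only [if_neg h]
      exact Nat.add_lt_add_left (hψb c hcB) m₁
  · intro c hc d hd hne hint
    by_cases h1 : c ∈ A <;> by_cases h2 : d ∈ A
    · simp only [if_pos h1, if_pos h2]; exact hφp c h1 d h2 hne hint
    · simp only [if_pos h1, if_neg h2]
      have := hφb c h1; omega
    · simp only [if_neg h1, if_pos h2]
      have := hφb d h2; omega
    · simp only [if_neg h1, if_neg h2]
      have hc' : c ∈ B := hc.resolve_left h1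
      have hd' : d ∈ B := hd.resolve_left h2
      have := hψp c hc' d hd' hne hint; omega

lemma bsc_colorable_biUnion (N : ℕ → Set (Set Pt)) (ξ : ℕ) :
    ∀ m : ℕ, (∀ iv < m, Colorable (N iv) ξ) →
      Colorable (⋃ iv ∈ Finset.range m, N iv) (m * ξ) := by
  intro m
  induction m with
  | zero =>
      intro _
      refine ⟨fun _ => 0, ?_, ?_⟩
      · intro c hc; simp at hc
      · intro c hc; simp at hc
  | succ m ih =>
      intro h
      have h1 := ih (fun iv hiv => h iv (Nat.lt_succ_of_lt hiv))
      have h2 := h m (Nat.lt_succ_self m)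
      have hun : (⋃ iv ∈ Finset.range (m+1), N iv)
          = (⋃ iv ∈ Finset.range m, N iv) ∪ N m := by
        ext w
        simp only [Set.mem_iUnion, Finset.mem_range, Set.mem_union]
        constructor
        · rintro ⟨iv, hiv, hw⟩
          rcases Nat.lt_succ_iff_lt_or_eq.1 hiv with h' | rfl
          · exact Or.inl ⟨iv, h', hw⟩
          · exact Or.inr hw
        · rintro (⟨iv, hiv, hw⟩ | hw)
          · exact ⟨iv, Nat.lt_succ_of_lt hiv, hw⟩
          · exact ⟨m, Nat.lt_succ_self m, hw⟩
      rw [hun]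
      have := bsc_colorable_union h1 h2
      have harith : m * ξ + ξ = (m+1) * ξ := by ring
      rw [harith] at this
      exact this

lemma bsc_chi_class_le {F : Set (Set Pt)} (hF : IsGrounded F) {k ξ : ℕ} (hk : 2 ≤ k)
    (homega : cliqueLE F k)
    (hind : ∀ G : Set (Set Pt), IsGrounded G → cliqueLE G (k - 1) → chi G ≤ ξ)
    {s : Set Pt} (hsF : s ∈ F) {N : Set (Set Pt)} (hNF : N ⊆ F) (hsN : s ∉ N)
    (hmeet : ∀ q ∈ N, (q ∩ s).Nonempty) : chi N ≤ ξ := by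
  apply hind N (bsc_grounded_subset hF hNF)
  intro K hKN hKcl
  by_contra hcard
  push_neg at hcard
  have hsK : s ∉ K := fun h => hsN (hKN h)
  have hsub : ↑(insert s K) ⊆ F := by
    intro c hc
    rcases Finset.mem_coe.1 hc with hc'
    rcases Finset.mem_insert.1 hc' with rfl | hc''
    · exact hsF
    · exact hNF (hKN hc'')
  have hpair : ∀ c ∈ insert s K, ∀ d ∈ insert s K, c ≠ d → (c ∩ d).Nonempty := by
    intro c hc d hd hne
    rcases Finset.mem_insert.1 hc with rfl | hc' <;> rcases Finset.mem_insert.1 hd with rfl | hd'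
    · exact absurd rfl hne
    · obtain ⟨w, hw⟩ := hmeet d (hKN hd')
      exact ⟨w, hw.2, hw.1⟩
    · exact hmeet c (hKN hc')
    · exact hKcl c hc' d hd' hne
  have hle := homega _ hsub hpair
  rw [Finset.card_insert_of_notMem hsK] at hle
  omega


/-! ### Topological machinery -/

/-- The baseline segment from `(a,0)` to `(b,0)` as an explicit set. -/
def SEGs (a b : ℝ) : Set Pt := {w : Pt | w.2 = 0 ∧ a ≤ w.1 ∧ w.1 ≤ b}

/-- The free region: upper halfplane minus walls and door. -/
def Us (A : Set Pt) (a b : ℝ) : Set Pt := upperH \ (A ∪ SEGs a b)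

/-- Radius of a safe half-disk around a door point. -/
noncomputable def bsc_rad (A : Set Pt) (a b : ℝ) (m : Pt) : ℝ :=
  min (Metric.infDist m A) (min (m.1 - a) (b - m.1)) / 2

/-- Safe open half-disk above a door point. -/
noncomputable def bsc_hd (A : Set Pt) (a b : ℝ) (m : Pt) : Set Pt :=
  Metric.ball m (bsc_rad A a b m) ∩ {w : Pt | 0 < w.2}

lemma bsc_isClosed_SEGs (a b : ℝ) : IsClosed (SEGs a b) := by
  have h : SEGs a b = (fun w : Pt => w.2) ⁻¹' {0} ∩ (fun w : Pt => w.1) ⁻¹' Set.Icc a b := by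
    ext w
    simp only [SEGs, Set.mem_setOf_eq, Set.mem_inter_iff, Set.mem_preimage,
      Set.mem_singleton_iff, Set.mem_Icc, and_assoc]
  rw [h]
  exact (isClosed_singleton.preimage continuous_snd).inter
    (isClosed_Icc.preimage continuous_fst)

lemma bsc_segs_bounded (a b : ℝ) : Bornology.IsBounded (SEGs a b) := by
  rw [isBounded_iff_forall_norm_le]
  refine ⟨max |a| |b|, ?_⟩
  rintro w ⟨h2, ha', hb'⟩
  rw [Prod.norm_def, h2, norm_zero, Real.norm_eq_abs]
  have h1 : |w.1| ≤ max |a| |b| := by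
    rw [abs_le]
    constructor
    · have h3 := neg_abs_le a
      have h4 := le_max_left |a| |b|
      linarith
    · have h3 := le_abs_self b
      have h4 := le_max_right |a| |b|
      linarith
  exact max_le h1 ((abs_nonneg a).trans (le_max_left _ _))

lemma bsc_segment_char (e₁ e₂ : Pt) (h1 : e₁.2 = 0) (h2 : e₂.2 = 0) (hne : e₁.1 ≠ e₂.1) :
    segment ℝ e₁ e₂ = SEGs (min e₁.1 e₂.1) (max e₁.1 e₂.1) := by
  ext w
  constructor
  · rintro ⟨σ, τ, hσ, hτ, hστ, rfl⟩
    have hfst : (σ • e₁ + τ • e₂).1 = σ * e₁.1 + τ * e₂.1 := rfl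
    have hsnd : (σ • e₁ + τ • e₂).2 = σ * e₁.2 + τ * e₂.2 := rfl
    refine ⟨by rw [hsnd, h1, h2]; ring, ?_, ?_⟩
    · rw [hfst]
      have a1 := mul_le_mul_of_nonneg_left (min_le_left e₁.1 e₂.1) hσ
      have a2 := mul_le_mul_of_nonneg_left (min_le_right e₁.1 e₂.1) hτ
      have key : σ * min e₁.1 e₂.1 + τ * min e₁.1 e₂.1 = min e₁.1 e₂.1 := by
        rw [← add_mul, hστ, one_mul]
      linarith
    · rw [hfst]
      have a1 := mul_le_mul_of_nonneg_left (le_max_left e₁.1 e₂.1) hσ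
      have a2 := mul_le_mul_of_nonneg_left (le_max_right e₁.1 e₂.1) hτ
      have key : σ * max e₁.1 e₂.1 + τ * max e₁.1 e₂.1 = max e₁.1 e₂.1 := by
        rw [← add_mul, hστ, one_mul]
      linarith
  · rintro ⟨hw2, hwa, hwb⟩
    have hd0 : e₂.1 - e₁.1 ≠ 0 := fun h => hne (by linarith [sub_eq_zero.1 h])
    refine ⟨(e₂.1 - w.1) / (e₂.1 - e₁.1), (w.1 - e₁.1) / (e₂.1 - e₁.1), ?_, ?_, ?_, ?_⟩
    · rcases hne.lt_or_gt with h | h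
      · have hmin : min e₁.1 e₂.1 = e₁.1 := min_eq_left h.le
        have hmax : max e₁.1 e₂.1 = e₂.1 := max_eq_right h.le
        rw [hmin] at hwa; rw [hmax] at hwb
        apply div_nonneg <;> linarith
      · have hmin : min e₁.1 e₂.1 = e₂.1 := min_eq_right h.le
        have hmax : max e₁.1 e₂.1 = e₁.1 := max_eq_left h.le
        rw [hmin] at hwa; rw [hmax] at hwb
        rw [← neg_div_neg_eq]; apply div_nonneg <;> linarith
    · rcases hne.lt_or_gt with h | h
      · have hmin : min e₁.1 e₂.1 = e₁.1 := min_eq_left h.le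
        have hmax : max e₁.1 e₂.1 = e₂.1 := max_eq_right h.le
        rw [hmin] at hwa; rw [hmax] at hwb
        apply div_nonneg <;> linarith
      · have hmin : min e₁.1 e₂.1 = e₂.1 := min_eq_right h.le
        have hmax : max e₁.1 e₂.1 = e₁.1 := max_eq_left h.le
        rw [hmin] at hwa; rw [hmax] at hwb
        rw [← neg_div_neg_eq]; apply div_nonneg <;> linarith
    · field_simp; ring
    · have hfst : (((e₂.1 - w.1) / (e₂.1 - e₁.1)) • e₁ + ((w.1 - e₁.1) / (e₂.1 - e₁.1)) • e₂).1
          = (e₂.1 - w.1) / (e₂.1 - e₁.1) * e₁.1 + (w.1 - e₁.1) / (e₂.1 - e₁.1) * e₂.1 := rfl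
      have hsnd : (((e₂.1 - w.1) / (e₂.1 - e₁.1)) • e₁ + ((w.1 - e₁.1) / (e₂.1 - e₁.1)) • e₂).2
          = (e₂.1 - w.1) / (e₂.1 - e₁.1) * e₁.2 + (w.1 - e₁.1) / (e₂.1 - e₁.1) * e₂.2 := rfl
      refine Prod.ext ?_ ?_
      · rw [hfst]; field_simp; ring
      · rw [hsnd, h1, h2, hw2]; ring

lemma bsc_convex_snd_pos : Convex ℝ {w : Pt | 0 < w.2} := by
  intro p hp q hq σ τ hσ hτ hστ
  simp only [Set.mem_setOf_eq] at hp hq ⊢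
  have h : (σ • p + τ • q).2 = σ * p.2 + τ * q.2 := rfl
  rw [h]
  rcases eq_or_lt_of_le hσ with h' | h'
  · have : τ = 1 := by linarith
    rw [← h', this]; simpa using hq
  · nlinarith

lemma bsc_joinedIn_of_convex {V U : Set Pt} (hV : Convex ℝ V) (hVU : V ⊆ U) {x y : Pt}
    (hx : x ∈ V) (hy : y ∈ V) : JoinedIn U x y :=
  ((hV.isPathConnected ⟨x, hx⟩).joinedIn x hx y hy).mono hVU

lemma bsc_joinedIn_of_cont {U : Set Pt} {f : ℝ → Pt} {s t : ℝ} (hst : s ≤ t)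
    (hf : ContinuousOn f (Set.Icc s t)) (hm : ∀ u ∈ Set.Icc s t, f u ∈ U) :
    JoinedIn U (f s) (f t) := by
  rcases eq_or_lt_of_le hst with rfl | hlt
  · exact JoinedIn.refl (hm s (Set.mem_Icc.2 ⟨le_refl s, le_refl s⟩))
  · have hmem : ∀ u : unitInterval, s + (t - s) * u.1 ∈ Set.Icc s t := by
      intro u
      constructor
      · nlinarith [u.2.1, u.2.2]
      · nlinarith [u.2.1, u.2.2]
    refine ⟨⟨⟨fun u => f (s + (t - s) * u.1), ?_⟩, ?_, ?_⟩, ?_⟩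
    · apply hf.comp_continuous
      · exact continuous_const.add (continuous_const.mul continuous_subtype_val)
      · exact hmem
    · show f (s + (t - s) * ((0 : unitInterval) : ℝ)) = f s
      norm_num
    · show f (s + (t - s) * ((1 : unitInterval) : ℝ)) = f t
      norm_num
    · intro u
      exact hm _ (hmem u)

lemma bsc_exists_cont_of_joinedIn {U : Set Pt} {x y : Pt} (h : JoinedIn U x y) :
    ∃ f : ℝ → Pt, ContinuousOn f (Set.Icc 0 1) ∧ f 0 = x ∧ f 1 = y ∧
      ∀ t ∈ Set.Icc (0:ℝ) 1, f t ∈ U := by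
  obtain ⟨p, hp⟩ := h
  have hmem : ∀ r : ℝ, min (max r 0) 1 ∈ Set.Icc (0:ℝ) 1 := by
    intro r
    constructor
    · exact le_min (le_max_right r 0) zero_le_one
    · exact min_le_right _ _
  refine ⟨fun r => p ⟨min (max r 0) 1, hmem r⟩, ?_, ?_, ?_, ?_⟩
  · apply Continuous.continuousOn
    apply p.continuous.comp
    apply Continuous.subtype_mk
    exact (continuous_id.max continuous_const).min continuous_const
  · show p ⟨min (max (0:ℝ) 0) 1, hmem 0⟩ = x
    have h0 : (⟨min (max (0:ℝ) 0) 1, hmem 0⟩ : unitInterval) = 0 := by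
      apply Subtype.ext; simp
    rw [h0]; exact p.source
  · show p ⟨min (max (1:ℝ) 0) 1, hmem 1⟩ = y
    have h1 : (⟨min (max (1:ℝ) 0) 1, hmem 1⟩ : unitInterval) = 1 := by
      apply Subtype.ext; simp
    rw [h1]; exact p.target
  · intro t _
    exact hp _

lemma bsc_pathComponentIn_eq {U : Set Pt} {x y : Pt} (h : JoinedIn U x y) :
    pathComponentIn U y = pathComponentIn U x := by
  ext w
  exact ⟨fun hw => h.trans hw, fun hw => h.symm.trans hw⟩

lemma bsc_seg_interior {a b : ℝ} {A : Set Pt} (hA : IsClosed A) (hAne : A.Nonempty)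
    (ha : ((a:ℝ),(0:ℝ)) ∈ A) (hb : ((b:ℝ),(0:ℝ)) ∈ A)
    {m : Pt} (hm : m ∈ SEGs a b) (hmA : m ∉ A) :
    0 < bsc_rad A a b m ∧ a < m.1 ∧ m.1 < b := by
  obtain ⟨hm2, hma, hmb⟩ := hm
  have hia : a < m.1 := by
    rcases lt_or_eq_of_le hma with h | h
    · exact h
    · exfalso; apply hmA
      have : m = ((a:ℝ),(0:ℝ)) := Prod.ext h.symm hm2
      rw [this]; exact ha
  have hib : m.1 < b := by
    rcases lt_or_eq_of_le hmb with h | h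
    · exact h
    · exfalso; apply hmA
      have : m = ((b:ℝ),(0:ℝ)) := Prod.ext h hm2
      rw [this]; exact hb
  have hpos : 0 < Metric.infDist m A := by
    rw [← (hA.notMem_iff_infDist_pos hAne)]
    exact hmA
  refine ⟨?_, hia, hib⟩
  unfold bsc_rad
  have := lt_min hpos (lt_min (by linarith : (0:ℝ) < m.1 - a) (by linarith : (0:ℝ) < b - m.1))
  linarith

lemma bsc_hd_sub_U {a b : ℝ} {A : Set Pt} {m : Pt} :
    bsc_hd A a b m ⊆ Us A a b := by
  rintro w ⟨hwb, hw2⟩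
  simp only [Set.mem_setOf_eq] at hw2
  refine ⟨le_of_lt hw2, ?_⟩
  rintro (hwA | hwS)
  · have h1 : Metric.infDist m A ≤ dist m w := Metric.infDist_le_dist_of_mem hwA
    have h2 : dist w m < bsc_rad A a b m := Metric.mem_ball.1 hwb
    rw [dist_comm] at h2
    have h3 : bsc_rad A a b m ≤ Metric.infDist m A / 2 := by
      unfold bsc_rad
      have := min_le_left (Metric.infDist m A) (min (m.1 - a) (b - m.1))
      linarith
    have h4 : (0:ℝ) ≤ Metric.infDist m A := Metric.infDist_nonneg
    linarith
  · exact absurd hwS.1 (ne_of_gt hw2)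

lemma bsc_hd_convex {a b : ℝ} {A : Set Pt} {m : Pt} : Convex ℝ (bsc_hd A a b m) :=
  (convex_ball m _).inter bsc_convex_snd_pos

lemma bsc_hd_wit {a b : ℝ} {A : Set Pt} {m : Pt} {h : ℝ}
    (hm2 : m.2 = 0) (h0 : 0 < h) (hr : h < bsc_rad A a b m) :
    ((m.1, h) : Pt) ∈ bsc_hd A a b m := by
  constructor
  · rw [Metric.mem_ball, Prod.dist_eq]
    have h1 : dist (((m.1, h) : Pt)).1 m.1 = 0 := by simp
    have h2 : dist (((m.1, h) : Pt)).2 m.2 = h := by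
      rw [hm2]; simp [Real.dist_eq, abs_of_pos h0]
    rw [h1, h2]
    have hmax : max 0 h < bsc_rad A a b m := max_lt (lt_trans h0 hr) hr
    simpa using hmax
  · exact h0


lemma bsc_corridor {a b : ℝ} {A : Set Pt} (hA : IsClosed A) (hAne : A.Nonempty)
    (hAbase : ∀ w ∈ A, w.2 = 0 → w.1 = a ∨ w.1 = b)
    (ha : ((a:ℝ),(0:ℝ)) ∈ A) (hb : ((b:ℝ),(0:ℝ)) ∈ A)
    {m m' : Pt} (hm : m ∈ SEGs a b) (hmA : m ∉ A) (hm' : m' ∈ SEGs a b) (hm'A : m' ∉ A)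
    {w w' : Pt} (hw : w ∈ bsc_hd A a b m) (hw' : w' ∈ bsc_hd A a b m') :
    JoinedIn (Us A a b) w w' := by
  obtain ⟨hr, hia, hib⟩ := bsc_seg_interior hA hAne ha hb hm hmA
  obtain ⟨hr', hia', hib'⟩ := bsc_seg_interior hA hAne ha hb hm' hm'A
  set u₁ := min m.1 m'.1 with hu₁
  set u₂ := max m.1 m'.1 with hu₂
  have hJc : IsCompact ((fun u : ℝ => ((u, 0) : Pt)) '' Set.Icc u₁ u₂) :=
    isCompact_Icc.image (continuous_id.prodMk continuous_const)
  have hJne : ((fun u : ℝ => ((u, 0) : Pt)) '' Set.Icc u₁ u₂).Nonempty :=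
    ⟨(u₁, 0), ⟨u₁, ⟨le_refl u₁, min_le_max⟩, rfl⟩⟩
  obtain ⟨w₀, hw₀J, hmin'⟩ :=
    hJc.exists_isMinOn hJne (Metric.continuous_infDist_pt A).continuousOn
  have hmin : ∀ v ∈ (fun u : ℝ => ((u, 0) : Pt)) '' Set.Icc u₁ u₂,
      Metric.infDist w₀ A ≤ Metric.infDist v A := fun v hv => isMinOn_iff.1 hmin' v hv
  set δ := Metric.infDist w₀ A with hδdef
  have hδpos : 0 < δ := by
    obtain ⟨u, hu, rfl⟩ := hw₀J
    rw [hδdef, ← hA.notMem_iff_infDist_pos hAne]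
    intro hmem
    rcases hAbase _ hmem rfl with h | h
    · have hu1 : u = a := h
      have h1 : a < u₁ := lt_min hia hia'
      have h2 : u₁ ≤ u := hu.1
      rw [hu1] at h2; linarith
    · have hu1 : u = b := h
      have h1 : u₂ < b := max_lt hib hib'
      have h2 : u ≤ u₂ := hu.2
      rw [hu1] at h2; linarith
  set hh := min (bsc_rad A a b m) (min (bsc_rad A a b m') δ) / 2 with hhdef
  have hhkey := lt_min hr (lt_min hr' hδpos)
  have hq1 := min_le_left (bsc_rad A a b m) (min (bsc_rad A a b m') δ)
  have hq2 := min_le_right (bsc_rad A a b m) (min (bsc_rad A a b m') δ)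
  have hq3 := min_le_left (bsc_rad A a b m') δ
  have hq4 := min_le_right (bsc_rad A a b m') δ
  have hhpos : 0 < hh := by rw [hhdef]; linarith
  have hh1 : hh < bsc_rad A a b m := by rw [hhdef]; linarith
  have hh2 : hh < bsc_rad A a b m' := by rw [hhdef]; linarith
  have hh3 : hh < δ := by rw [hhdef]; linarith
  set CC := {v : Pt | u₁ ≤ v.1 ∧ v.1 ≤ u₂ ∧ 0 < v.2 ∧ v.2 < δ} with hCCdef
  have hCCconv : Convex ℝ CC := by
    intro p hp q hq σ τ hσ hτ hστ
    simp only [hCCdef, Set.mem_setOf_eq] at hp hq ⊢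
    have e1 : (σ • p + τ • q).1 = σ * p.1 + τ * q.1 := rfl
    have e2 : (σ • p + τ • q).2 = σ * p.2 + τ * q.2 := rfl
    rw [e1, e2]
    have k1 : σ * u₁ + τ * u₁ = u₁ := by rw [← add_mul, hστ, one_mul]
    have k2 : σ * u₂ + τ * u₂ = u₂ := by rw [← add_mul, hστ, one_mul]
    have k3 : σ * δ + τ * δ = δ := by rw [← add_mul, hστ, one_mul]
    refine ⟨?_, ?_, ?_, ?_⟩
    · have a1 := mul_le_mul_of_nonneg_left hp.1 hσ
      have a2 := mul_le_mul_of_nonneg_left hq.1 hτ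
      linarith
    · have a1 := mul_le_mul_of_nonneg_left hp.2.1 hσ
      have a2 := mul_le_mul_of_nonneg_left hq.2.1 hτ
      linarith
    · rcases eq_or_lt_of_le hσ with h' | h'
      · have hτ1 : τ = 1 := by linarith
        rw [← h', hτ1]; simpa using hq.2.2.1
      · nlinarith [hp.2.2.1, hq.2.2.1]
    · rcases eq_or_lt_of_le hσ with h' | h'
      · have hτ1 : τ = 1 := by linarith
        rw [← h', hτ1]; simpa using hq.2.2.2
      · have a1 := mul_lt_mul_of_pos_left hp.2.2.2 h'
        have a2 := mul_le_mul_of_nonneg_left (le_of_lt hq.2.2.2) hτ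
        linarith
  have hCCU : CC ⊆ Us A a b := by
    rintro v ⟨h1, h2, h3, h4⟩
    refine ⟨le_of_lt h3, ?_⟩
    rintro (hvA | hvS)
    · have hmem : ((v.1, 0) : Pt) ∈ (fun u : ℝ => ((u, 0) : Pt)) '' Set.Icc u₁ u₂ :=
        ⟨v.1, ⟨h1, h2⟩, rfl⟩
      have h5 := hmin _ hmem
      have h6 : Metric.infDist ((v.1, 0) : Pt) A ≤ dist ((v.1, 0) : Pt) v :=
        Metric.infDist_le_dist_of_mem hvA
      have h7 : dist ((v.1, 0) : Pt) v = v.2 := by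
        rw [Prod.dist_eq]
        have e1 : dist ((v.1, 0) : Pt).1 v.1 = 0 := by simp
        have e2 : dist ((v.1, 0) : Pt).2 v.2 = v.2 := by
          show dist (0:ℝ) v.2 = v.2
          rw [Real.dist_eq, abs_sub_comm, sub_zero, abs_of_pos h3]
        rw [e1, e2]
        exact max_eq_right (le_of_lt h3)
      rw [h7] at h6
      linarith
    · exact absurd hvS.1 (ne_of_gt h3)
  have hwitm : ((m.1, hh) : Pt) ∈ bsc_hd A a b m := bsc_hd_wit hm.1 hhpos hh1
  have hwitm' : ((m'.1, hh) : Pt) ∈ bsc_hd A a b m' := bsc_hd_wit hm'.1 hhpos hh2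
  have hCCm : ((m.1, hh) : Pt) ∈ CC := ⟨min_le_left _ _, le_max_left _ _, hhpos, hh3⟩
  have hCCm' : ((m'.1, hh) : Pt) ∈ CC := ⟨min_le_right _ _, le_max_right _ _, hhpos, hh3⟩
  have j1 : JoinedIn (Us A a b) w ((m.1, hh) : Pt) :=
    bsc_joinedIn_of_convex bsc_hd_convex bsc_hd_sub_U hw hwitm
  have j2 : JoinedIn (Us A a b) ((m.1, hh) : Pt) ((m'.1, hh) : Pt) :=
    bsc_joinedIn_of_convex hCCconv hCCU hCCm hCCm'
  have j3 : JoinedIn (Us A a b) ((m'.1, hh) : Pt) w' :=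
    bsc_joinedIn_of_convex bsc_hd_convex bsc_hd_sub_U hwitm' hw'
  exact (j1.trans j2).trans j3

lemma bsc_approach {a b : ℝ} {A : Set Pt} (hA : IsClosed A) (hAne : A.Nonempty)
    (ha : ((a:ℝ),(0:ℝ)) ∈ A) (hb : ((b:ℝ),(0:ℝ)) ∈ A)
    {γ : ℝ → Pt} (hγc : ContinuousOn γ (Set.Icc 0 1))
    (hγm : ∀ t ∈ Set.Icc (0:ℝ) 1, γ t ∈ upperH ∧ γ t ∉ A)
    {t₀ : ℝ} (ht₀ : t₀ ∈ Set.Icc (0:ℝ) 1) (hseg : γ t₀ ∈ SEGs a b) :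
    ∃ ρ > 0, ∀ s ∈ Set.Icc (0:ℝ) 1, dist s t₀ < ρ →
      (γ s ∈ SEGs a b ∨ γ s ∈ bsc_hd A a b (γ t₀)) := by
  have hmA : γ t₀ ∉ A := (hγm _ ht₀).2
  obtain ⟨hr, hia, hib⟩ := bsc_seg_interior hA hAne ha hb hseg hmA
  have hc := hγc t₀ ht₀
  rw [Metric.continuousWithinAt_iff] at hc
  obtain ⟨ρ, hρ, hball⟩ := hc (bsc_rad A a b (γ t₀)) hr
  refine ⟨ρ, hρ, fun s hs hdist => ?_⟩
  have hd2 : dist (γ s) (γ t₀) < bsc_rad A a b (γ t₀) := hball hs hdist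
  by_cases h2 : (γ s).2 = 0
  · left
    have h1 : dist (γ s).1 (γ t₀).1 ≤ dist (γ s) (γ t₀) := by
      rw [Prod.dist_eq]; exact le_max_left _ _
    have habs : |(γ s).1 - (γ t₀).1| < bsc_rad A a b (γ t₀) := by
      rw [← Real.dist_eq]; exact lt_of_le_of_lt h1 hd2
    obtain ⟨hl, hr2⟩ := abs_lt.1 habs
    have hrlea : bsc_rad A a b (γ t₀) ≤ (γ t₀).1 - a := by
      unfold bsc_rad
      have q1 := min_le_right (Metric.infDist (γ t₀) A) (min ((γ t₀).1 - a) (b - (γ t₀).1))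
      have q2 := min_le_left ((γ t₀).1 - a) (b - (γ t₀).1)
      linarith
    have hrleb : bsc_rad A a b (γ t₀) ≤ b - (γ t₀).1 := by
      unfold bsc_rad
      have q1 := min_le_right (Metric.infDist (γ t₀) A) (min ((γ t₀).1 - a) (b - (γ t₀).1))
      have q2 := min_le_right ((γ t₀).1 - a) (b - (γ t₀).1)
      linarith
    exact ⟨h2, by linarith, by linarith⟩
  · right
    refine ⟨Metric.mem_ball.2 hd2, ?_⟩
    have hup : (0:ℝ) ≤ (γ s).2 := (hγm s hs).1
    exact lt_of_le_of_ne hup (Ne.symm h2)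

lemma bsc_lemE {a b : ℝ} {A : Set Pt} (hA : IsClosed A) (hAne : A.Nonempty)
    (hAbase : ∀ w ∈ A, w.2 = 0 → w.1 = a ∨ w.1 = b)
    (ha : ((a:ℝ),(0:ℝ)) ∈ A) (hb : ((b:ℝ),(0:ℝ)) ∈ A)
    {z' : Pt} (hz' : z' ∈ Us A a b)
    {γ : ℝ → Pt} (hγc : ContinuousOn γ (Set.Icc 0 1))
    (hγm : ∀ t ∈ Set.Icc (0:ℝ) 1, γ t ∈ upperH ∧ γ t ∉ A)
    (hanchor : γ 0 = z' ∨ (γ 0 ∈ SEGs a b ∧ z' ∈ bsc_hd A a b (γ 0))) :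
    ∀ t ∈ Set.Icc (0:ℝ) 1, (γ t ∈ pathComponentIn (Us A a b) z' ∪ SEGs a b) ∧
      (γ t ∈ SEGs a b → bsc_hd A a b (γ t) ⊆ pathComponentIn (Us A a b) z') := by
  intro t ht
  have hUmem : ∀ s ∈ Set.Icc (0:ℝ) 1, γ s ∉ SEGs a b → γ s ∈ Us A a b := by
    intro s hs hns
    exact ⟨(hγm s hs).1, fun h => h.elim (hγm s hs).2 hns⟩
  set M := {s | s ∈ Set.Icc 0 t ∧ γ s ∈ SEGs a b} with hMdef
  have hsubI : Set.Icc (0:ℝ) t ⊆ Set.Icc (0:ℝ) 1 := Set.Icc_subset_Icc (le_refl 0) ht.2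
  have hMc : IsClosed M := by
    have heq : M = Set.Icc 0 t ∩ γ ⁻¹' (SEGs a b) := by ext u; exact Iff.rfl
    rw [heq]
    exact (hγc.mono hsubI).preimage_isClosed_of_isClosed isClosed_Icc (bsc_isClosed_SEGs a b)
  rcases Set.eq_empty_or_nonempty M with hMe | hMne
  · have hno : ∀ s ∈ Set.Icc (0:ℝ) t, γ s ∉ SEGs a b := by
      intro s hs hcon
      have hsM : s ∈ M := ⟨hs, hcon⟩
      rw [hMe] at hsM; exact hsM
    rcases hanchor with h0 | ⟨h0seg, _⟩
    · have hJ : JoinedIn (Us A a b) (γ 0) (γ t) :=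
        bsc_joinedIn_of_cont ht.1 (hγc.mono hsubI) (fun u hu => hUmem u (hsubI hu) (hno u hu))
      rw [h0] at hJ
      exact ⟨Or.inl hJ, fun hseg => absurd hseg (hno t ⟨ht.1, le_refl t⟩)⟩
    · exact absurd h0seg (hno 0 ⟨le_refl 0, ht.1⟩)
  · have hbdd_b : BddBelow M := ⟨0, fun s hs => hs.1.1⟩
    have hbdd_a : BddAbove M := ⟨t, fun s hs => hs.1.2⟩
    set t₁ := sInf M with ht₁def
    set ta := sSup M with htadef
    have hMt₁ : t₁ ∈ M := hMc.csInf_mem hMne hbdd_b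
    have hMta : ta ∈ M := hMc.csSup_mem hMne hbdd_a
    have ht₁I : t₁ ∈ Set.Icc (0:ℝ) 1 := hsubI hMt₁.1
    have htaI : ta ∈ Set.Icc (0:ℝ) 1 := hsubI hMta.1
    have ht₁A : γ t₁ ∉ A := (hγm _ ht₁I).2
    have htaA : γ ta ∉ A := (hγm _ htaI).2
    have stepA : ∃ w₁ ∈ bsc_hd A a b (γ t₁), JoinedIn (Us A a b) z' w₁ := by
      rcases hanchor with h0 | ⟨h0seg, h0hd⟩
      · have h0M : (0:ℝ) ∉ M := by
          intro hc
          have h0U : γ 0 ∈ Us A a b := by rw [h0]; exact hz'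
          exact h0U.2 (Or.inr hc.2)
        have ht₁pos : 0 < t₁ := by
          rcases eq_or_lt_of_le hMt₁.1.1 with h | h
          · exfalso; apply h0M; rw [h]; exact hMt₁
          · exact h
        obtain ⟨ρ, hρ, hρs⟩ := bsc_approach hA hAne ha hb hγc hγm ht₁I hMt₁.2
        set s₀ := max (t₁ - ρ/2) (t₁/2) with hs₀def
        have hs₀0 : 0 ≤ s₀ := le_trans (by linarith) (le_max_right (t₁ - ρ/2) (t₁/2))
        have hs₀lt : s₀ < t₁ := max_lt (by linarith) (by linarith)
        have hs₀I : s₀ ∈ Set.Icc (0:ℝ) 1 := ⟨hs₀0, le_trans (le_of_lt hs₀lt) ht₁I.2⟩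
        have hs₀d : dist s₀ t₁ < ρ := by
          rw [Real.dist_eq, abs_of_nonpos (by linarith)]
          have hle := le_max_left (t₁ - ρ/2) (t₁/2)
          linarith
        have hs₀seg : γ s₀ ∉ SEGs a b := by
          intro hc
          have hsM : s₀ ∈ M :=
            ⟨⟨hs₀0, le_trans (le_of_lt hs₀lt) hMt₁.1.2⟩, hc⟩
          exact absurd (csInf_le hbdd_b hsM) (not_le.2 hs₀lt)
        have hs₀hd : γ s₀ ∈ bsc_hd A a b (γ t₁) :=
          (hρs s₀ hs₀I hs₀d).resolve_left hs₀seg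
        have hJ : JoinedIn (Us A a b) (γ 0) (γ s₀) := by
          apply bsc_joinedIn_of_cont hs₀0 (hγc.mono (Set.Icc_subset_Icc (le_refl 0) hs₀I.2))
          intro u hu
          apply hUmem u ⟨hu.1, le_trans hu.2 hs₀I.2⟩
          intro hc
          have huM : u ∈ M :=
            ⟨⟨hu.1, le_trans (le_trans hu.2 (le_of_lt hs₀lt)) hMt₁.1.2⟩, hc⟩
          exact absurd (csInf_le hbdd_b huM) (not_le.2 (lt_of_le_of_lt hu.2 hs₀lt))
        rw [h0] at hJ
        exact ⟨γ s₀, hs₀hd, hJ⟩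
      · have h0M : (0:ℝ) ∈ M := ⟨⟨le_refl 0, ht.1⟩, h0seg⟩
        have ht₁0 : t₁ = 0 := le_antisymm (csInf_le hbdd_b h0M) hMt₁.1.1
        refine ⟨z', ?_, JoinedIn.refl hz'⟩
        rw [ht₁0]; exact h0hd
    obtain ⟨w₁, hw₁hd, hw₁J⟩ := stepA
    by_cases hts : γ t ∈ SEGs a b
    · refine ⟨Or.inr hts, fun _ => ?_⟩
      intro w'' hw''
      have hcor : JoinedIn (Us A a b) w₁ w'' :=
        bsc_corridor hA hAne hAbase ha hb hMt₁.2 ht₁A hts ((hγm _ ht).2) hw₁hd hw''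
      exact hw₁J.trans hcor
    · have htat : ta < t :=
        lt_of_le_of_ne hMta.1.2 (fun h => hts (by rw [← h]; exact hMta.2))
      obtain ⟨ρ', hρ', hρs'⟩ := bsc_approach hA hAne ha hb hγc hγm htaI hMta.2
      set s₁ := min (ta + ρ'/2) ((ta + t)/2) with hs₁def
      have hs₁gt : ta < s₁ := lt_min (by linarith) (by linarith)
      have hs₁le : s₁ ≤ t := le_trans (min_le_right _ _) (by linarith)
      have hs₁I : s₁ ∈ Set.Icc (0:ℝ) 1 :=
        ⟨le_trans hMta.1.1 (le_of_lt hs₁gt), le_trans hs₁le ht.2⟩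
      have hs₁d : dist s₁ ta < ρ' := by
        rw [Real.dist_eq, abs_of_nonneg (by linarith)]
        have hle := min_le_left (ta + ρ'/2) ((ta + t)/2)
        linarith
      have hnoM : ∀ u, ta < u → u ≤ t → γ u ∉ SEGs a b := by
        intro u hu1 hu2 hc
        have huM : u ∈ M := ⟨⟨le_trans hMta.1.1 (le_of_lt hu1), hu2⟩, hc⟩
        exact absurd (le_csSup hbdd_a huM) (not_le.2 hu1)
      have hs₁hd : γ s₁ ∈ bsc_hd A a b (γ ta) :=
        (hρs' s₁ hs₁I hs₁d).resolve_left (hnoM s₁ hs₁gt hs₁le)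
      have hJ2 : JoinedIn (Us A a b) (γ s₁) (γ t) := by
        apply bsc_joinedIn_of_cont hs₁le (hγc.mono (Set.Icc_subset_Icc hs₁I.1 ht.2))
        intro u hu
        exact hUmem u ⟨le_trans hs₁I.1 hu.1, le_trans hu.2 ht.2⟩
          (hnoM u (lt_of_lt_of_le hs₁gt hu.1) hu.2)
      have hcor : JoinedIn (Us A a b) w₁ (γ s₁) :=
        bsc_corridor hA hAne hAbase ha hb hMt₁.2 ht₁A hMta.2 htaA hw₁hd hs₁hd
      exact ⟨Or.inl ((hw₁J.trans hcor).trans hJ2), fun hc => absurd hc hts⟩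


/-- The crossing lemma: a curve of the family passing from the region of `q` to the
exterior of the bracket must meet `q` or `sel q`. -/
lemma bsc_lemC {F : Set (Set Pt)} (hF : IsGrounded F) {l : CBracket} (hl : IsCBracket F l)
    {q : Set Pt} (hq : q ∈ l.P) {c : Set Pt} (hcF : c ∈ F)
    {z x : Pt} (hzc : z ∈ c) (hz2 : 0 < z.2) (hzr : z ∈ l.regionOf q)
    (hxc : x ∈ c) (hxe : x ∈ l.exter)
    (hcq : c ∩ q = ∅) : (c ∩ l.sel q).Nonempty := by
  by_contra hcs'
  rw [Set.not_nonempty_iff_eq_empty] at hcs'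
  obtain ⟨hPF, hSF, hprec, hmeet, hsel, _⟩ := hl
  have hqF : q ∈ F := hPF hq
  have hqg : IsGroundedCurve q := hF.2.1 q hqF
  have hselS : l.sel q ∈ l.S := (hsel q hq).1
  have hselF : l.sel q ∈ F := hSF hselS
  have hselg : IsGroundedCurve (l.sel q) := hF.2.1 _ hselF
  have hcg : IsGroundedCurve c := hF.2.1 c hcF
  have hqsel : q ≠ l.sel q := by
    intro h
    rcases hprec with hp | hp
    · have := hp q hq (l.sel q) hselS
      rw [← h] at this; exact lt_irrefl _ this
    · have := hp q hq (l.sel q) hselS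
      rw [← h] at this; exact lt_irrefl _ this
  obtain ⟨hbq_mem, hbq2⟩ := bsc_basepoint_spec hqg
  obtain ⟨hbs_mem, hbs2⟩ := bsc_basepoint_spec hselg
  have hbne : basepoint q ≠ basepoint (l.sel q) := hF.2.2 q hqF _ hselF hqsel
  have hbne1 : (basepoint q).1 ≠ (basepoint (l.sel q)).1 := by
    intro h
    exact hbne (Prod.ext h (by rw [hbq2, hbs2]))
  set a := min (basepoint q).1 (basepoint (l.sel q)).1 with hadef
  set b := max (basepoint q).1 (basepoint (l.sel q)).1 with hbdef
  have hSclosed : IsClosed (⋃₀ l.S) := bsc_sUnion_closed hF hSF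
  have hSne : (q ∩ ⋃₀ l.S).Nonempty := by
    obtain ⟨s, hsS, w, hw1, hw2⟩ := hmeet q hq
    exact ⟨w, hw1, ⟨s, hsS, hw2⟩⟩
  obtain ⟨hT, hfpD⟩ := bsc_firstTime_spec hqg hSclosed hSne
  obtain ⟨hqcont, hqimg, hq0⟩ := bsc_param_spec hqg
  have hTpos : 0 < firstTime q (⋃₀ l.S) := by
    rcases eq_or_lt_of_le hT.1 with h | h
    · exfalso
      rw [← h, hq0] at hfpD
      obtain ⟨s, hsS, hes⟩ := hfpD
      have hsg : IsGroundedCurve s := hF.2.1 s (hSF hsS)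
      have heq : basepoint q = basepoint s := bsc_basepoint_unique hsg hes hbq2
      have hqs : q ≠ s := by
        intro hh
        rcases hprec with hp | hp
        · have := hp q hq s hsS; rw [← hh] at this; exact lt_irrefl _ this
        · have := hp q hq s hsS; rw [← hh] at this; exact lt_irrefl _ this
      exact hF.2.2 q hqF s (hSF hsS) hqs heq
    · exact h
  set A := closure (portionBefore q (⋃₀ l.S)) ∪ l.sel q with hAdef
  have hIccsub : Set.Icc (0:ℝ) (firstTime q (⋃₀ l.S)) ⊆ Set.Icc 0 1 :=
    Set.Icc_subset_Icc (le_refl 0) hT.2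
  have himgsub : param q '' Set.Icc 0 (firstTime q (⋃₀ l.S)) ⊆ q := by
    intro w hw
    obtain ⟨u, hu, rfl⟩ := hw
    have hmem := Set.mem_image_of_mem (param q) (hIccsub hu)
    rw [hqimg] at hmem; exact hmem
  have hpBsub : closure (portionBefore q (⋃₀ l.S))
      ⊆ param q '' Set.Icc 0 (firstTime q (⋃₀ l.S)) := by
    apply closure_minimal
    · exact Set.image_mono Set.Ico_subset_Icc_self
    · exact (isCompact_Icc.image_of_continuousOn (hqcont.mono hIccsub)).isClosed
  have hAsub : A ⊆ q ∪ l.sel q := by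
    rintro w (hw | hw)
    · exact Or.inl (himgsub (hpBsub hw))
    · exact Or.inr hw
  have hAclosed : IsClosed A := isClosed_closure.union (bsc_curve_compact hselg).isClosed
  have hAne : A.Nonempty := ⟨basepoint (l.sel q), Or.inr hbs_mem⟩
  have hcA : ∀ w ∈ c, w ∉ A := by
    intro w hw hwA
    rcases hAsub hwA with h | h
    · have hww : w ∈ c ∩ q := ⟨hw, h⟩
      rw [hcq] at hww; exact hww
    · have hww : w ∈ c ∩ l.sel q := ⟨hw, h⟩
      rw [hcs'] at hww; exact hww
  have hAbase : ∀ w ∈ A, w.2 = 0 → w.1 = a ∨ w.1 = b := by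
    intro w hwA hw2
    have hw_eq : w = basepoint q ∨ w = basepoint (l.sel q) := by
      rcases hwA with h | h
      · exact Or.inl (bsc_basepoint_unique hqg (himgsub (hpBsub h)) hw2)
      · exact Or.inr (bsc_basepoint_unique hselg h hw2)
    rcases hw_eq with rfl | rfl
    · rcases le_total (basepoint q).1 (basepoint (l.sel q)).1 with h | h
      · exact Or.inl (min_eq_left h).symm
      · exact Or.inr (max_eq_left h).symm
    · rcases le_total (basepoint q).1 (basepoint (l.sel q)).1 with h | h
      · exact Or.inr (max_eq_right h).symm
      · exact Or.inl (min_eq_right h).symm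
  have he₁A : basepoint q ∈ A := by
    left
    apply subset_closure
    exact ⟨0, ⟨le_refl 0, hTpos⟩, hq0⟩
  have he₂A : basepoint (l.sel q) ∈ A := Or.inr hbs_mem
  have haA : ((a, 0) : Pt) ∈ A := by
    rcases le_total (basepoint q).1 (basepoint (l.sel q)).1 with h | h
    · have heq : ((a, 0) : Pt) = basepoint q := Prod.ext (min_eq_left h) hbq2.symm
      rw [heq]; exact he₁A
    · have heq : ((a, 0) : Pt) = basepoint (l.sel q) := Prod.ext (min_eq_right h) hbs2.symm
      rw [heq]; exact he₂A
  have hbA : ((b, 0) : Pt) ∈ A := by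
    rcases le_total (basepoint q).1 (basepoint (l.sel q)).1 with h | h
    · have heq : ((b, 0) : Pt) = basepoint (l.sel q) := Prod.ext (max_eq_right h) hbs2.symm
      rw [heq]; exact he₂A
    · have heq : ((b, 0) : Pt) = basepoint q := Prod.ext (max_eq_left h) hbq2.symm
      rw [heq]; exact he₁A
  have hsegSEG : segment ℝ (basepoint q) (basepoint (l.sel q)) = SEGs a b :=
    bsc_segment_char _ _ hbq2 hbs2 hbne1
  have hWeq : portionBefore q (⋃₀ l.S) ∪ l.sel q ∪
      segment ℝ (basepoint q) (basepoint (l.sel q)) = A ∪ SEGs a b := by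
    rw [hsegSEG]
    apply Set.Subset.antisymm
    · apply Set.union_subset_union_left
      exact Set.union_subset_union_left _ subset_closure
    · apply Set.union_subset_union_left
      intro w hw
      rcases hw with h | h
      · have himg : param q '' Set.Icc 0 (firstTime q (⋃₀ l.S))
            = portionBefore q (⋃₀ l.S) ∪ {param q (firstTime q (⋃₀ l.S))} := by
          rw [portionBefore, ← Set.image_singleton, ← Set.image_union,
            Set.Ico_union_right hT.1]
        have hmem := hpBsub h
        rw [himg] at hmem
        rcases hmem with h' | h'
        · exact Or.inl h'
        · rw [Set.mem_singleton_iff] at h'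
          rw [h']
          exact Or.inr ((hsel q hq).2)
      · exact Or.inr h
  have hupperc : c ⊆ upperH := hcg.2.1
  have hzU : z ∈ Us A a b := by
    refine ⟨hupperc hzc, ?_⟩
    rintro (h | h)
    · exact hcA z hzc h
    · exact absurd h.1 (ne_of_gt hz2)
  have hznotin : z ∉ extOf (A ∪ SEGs a b) := by
    have hz' : z ∉ extOf (portionBefore q (⋃₀ l.S) ∪ l.sel q ∪
        segment ℝ (basepoint q) (basepoint (l.sel q))) := hzr.2
    rw [hWeq] at hz'
    exact hz'
  have hzB : Bornology.IsBounded (pathComponentIn (Us A a b) z) := by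
    by_contra hnb
    exact hznotin ⟨hzU, hnb⟩
  have hAW : A ⊆ ⋃₀ (l.P ∪ l.S) := by
    intro w hw
    rcases hAsub hw with h | h
    · exact ⟨q, Or.inl hq, h⟩
    · exact ⟨l.sel q, Or.inr hselS, h⟩
  have hxW : x ∉ ⋃₀ (l.P ∪ l.S) := hxe.1.2
  have hxnb : ¬ Bornology.IsBounded (pathComponentIn (upperH \ ⋃₀ (l.P ∪ l.S)) x) := hxe.2
  have hxA : x ∉ A := fun h => hxW (hAW h)
  obtain ⟨hccont, hcimg, _⟩ := bsc_param_spec hcg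
  have hzc' := hzc; have hxc' := hxc
  rw [← hcimg] at hzc' hxc'
  obtain ⟨tz, htz, htzz⟩ := hzc'
  obtain ⟨tx, htx, htxx⟩ := hxc'
  set γ₁ : ℝ → Pt := fun u => param c (tz + (tx - tz) * u) with hγ₁def
  have hγmaps : ∀ u ∈ Set.Icc (0:ℝ) 1, tz + (tx - tz) * u ∈ Set.Icc (0:ℝ) 1 := by
    intro u hu
    have hrw : tz + (tx - tz) * u = (1 - u) * tz + u * tx := by ring
    rw [hrw]
    constructor
    · have a1 : 0 ≤ (1 - u) * tz := mul_nonneg (by linarith [hu.2]) htz.1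
      have a2 : 0 ≤ u * tx := mul_nonneg hu.1 htx.1
      linarith
    · have a1 : (1 - u) * tz ≤ (1 - u) * 1 :=
        mul_le_mul_of_nonneg_left htz.2 (by linarith [hu.2])
      have a2 : u * tx ≤ u * 1 := mul_le_mul_of_nonneg_left htx.2 hu.1
      nlinarith
  have hγ₁c : ContinuousOn γ₁ (Set.Icc 0 1) := by
    apply hccont.comp
    · exact (continuous_const.add (continuous_const.mul continuous_id)).continuousOn
    · intro u hu; exact hγmaps u hu
  have hγ₁mem : ∀ u ∈ Set.Icc (0:ℝ) 1, γ₁ u ∈ c := by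
    intro u hu
    have hmem := Set.mem_image_of_mem (param c) (hγmaps u hu)
    rw [hcimg] at hmem; exact hmem
  have hγ₁m : ∀ u ∈ Set.Icc (0:ℝ) 1, γ₁ u ∈ upperH ∧ γ₁ u ∉ A := by
    intro u hu
    exact ⟨hupperc (hγ₁mem u hu), hcA _ (hγ₁mem u hu)⟩
  have hγ₁0 : γ₁ 0 = z := by
    show param c (tz + (tx - tz) * 0) = z
    rw [show tz + (tx - tz) * 0 = tz by ring]
    exact htzz
  have hγ₁1 : γ₁ 1 = x := by
    show param c (tz + (tx - tz) * 1) = x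
    rw [show tz + (tx - tz) * 1 = tx by ring]
    exact htxx
  have happ1 := bsc_lemE hAclosed hAne hAbase haA hbA hzU hγ₁c hγ₁m (Or.inl hγ₁0) 1
    (Set.mem_Icc.2 ⟨zero_le_one, le_refl 1⟩)
  rw [hγ₁1] at happ1
  have hbigBdd : Bornology.IsBounded (pathComponentIn (Us A a b) z ∪ SEGs a b) :=
    hzB.union (bsc_segs_bounded a b)
  obtain ⟨C₀, hC₀⟩ := isBounded_iff_forall_norm_le.1 hbigBdd
  have hfar : ∃ y ∈ pathComponentIn (upperH \ ⋃₀ (l.P ∪ l.S)) x, C₀ < ‖y‖ := by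
    by_contra hcon
    push_neg at hcon
    exact hxnb (isBounded_iff_forall_norm_le.2 ⟨C₀, hcon⟩)
  obtain ⟨y, hy, hyC⟩ := hfar
  have hjoin : JoinedIn (upperH \ ⋃₀ (l.P ∪ l.S)) x y := hy
  obtain ⟨f, hfc, hf0, hf1, hfm⟩ := bsc_exists_cont_of_joinedIn hjoin
  have hfm' : ∀ u ∈ Set.Icc (0:ℝ) 1, f u ∈ upperH ∧ f u ∉ A := by
    intro u hu
    have hmem := hfm u hu
    exact ⟨hmem.1, fun h => hmem.2 (hAW h)⟩
  rcases happ1.1 with hxCP | hxSEG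
  · have hxU : x ∈ Us A a b := pathComponentIn_subset hxCP
    have hcompeq : pathComponentIn (Us A a b) x = pathComponentIn (Us A a b) z :=
      bsc_pathComponentIn_eq hxCP
    have happ2 := bsc_lemE hAclosed hAne hAbase haA hbA hxU hfc hfm' (Or.inl hf0) 1
      (Set.mem_Icc.2 ⟨zero_le_one, le_refl 1⟩)
    rw [hf1, hcompeq] at happ2
    have := hC₀ y happ2.1
    linarith
  · obtain ⟨hrpos, _, _⟩ := bsc_seg_interior hAclosed hAne haA hbA hxSEG hxA
    set z'' : Pt := (x.1, bsc_rad A a b x / 2) with hz''def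
    have hz''hd : z'' ∈ bsc_hd A a b x := bsc_hd_wit hxSEG.1 (by linarith) (by linarith)
    have hz''CP : z'' ∈ pathComponentIn (Us A a b) z := happ1.2 hxSEG hz''hd
    have hz''U : z'' ∈ Us A a b := bsc_hd_sub_U hz''hd
    have hcompeq : pathComponentIn (Us A a b) z'' = pathComponentIn (Us A a b) z :=
      bsc_pathComponentIn_eq hz''CP
    have hanch : f 0 ∈ SEGs a b ∧ z'' ∈ bsc_hd A a b (f 0) := by
      rw [hf0]; exact ⟨hxSEG, hz''hd⟩
    have happ2 := bsc_lemE hAclosed hAne hAbase haA hbA hz''U hfc hfm' (Or.inr hanch) 1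
      (Set.mem_Icc.2 ⟨zero_le_one, le_refl 1⟩)
    rw [hf1, hcompeq] at happ2
    have := hC₀ y happ2.1
    linarith

/-- A bracket system with large chromatic numbers yields a clique of supports. -/
theorem bracket_system_clique (k ξ : ℕ) (hk : 2 ≤ k)
    (hind : ∀ G : Set (Set Pt), IsGrounded G → cliqueLE G (k - 1) → chi G ≤ ξ)
    (F : Set (Set Pt)) (hF : IsGrounded F) (homega : cliqueLE F k)
    (n : ℕ) (B : Fin n → CBracket) (hB : IsCBracketSystem F B)
    (hchi : ∀ i, (n - 1) * ξ < chi (B i).P) :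
    ∃ s : Fin n → Set Pt, (∀ i, s i ∈ (B i).S) ∧
      ∀ i j, i ≠ j → (s i ∩ s j).Nonempty := by
  classical
  obtain ⟨hbr, hint, hext⟩ := hB
  have hclaim : ∀ m : ℕ, m ≤ n → ∃ p : Fin n → Set Pt,
      (∀ i : Fin n, (i : ℕ) < m → p i ∈ (B i).P) ∧
      (∀ i j : Fin n, (i : ℕ) < m → (j : ℕ) < m → i < j →
        (((B i).sel (p i)) ∩ ((B j).sel (p j))).Nonempty) := by
    intro m
    induction m with
    | zero =>
        intro _
        exact ⟨fun _ => ∅, fun i hi => absurd hi (Nat.not_lt_zero _),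
          fun i j hi => absurd hi (Nat.not_lt_zero _)⟩
    | succ m ih =>
        intro hm1
        have hm : m < n := hm1
        obtain ⟨p, h1, h2⟩ := ih (Nat.le_of_succ_le hm1)
        set t : Fin n := ⟨m, hm⟩ with htdef
        have hfacts : ∀ i : Fin n, (i : ℕ) < m →
            (B i).sel (p i) ∈ F ∧ (B i).sel (p i) ∉ (B t).P ∧
            (∃ z, z ∈ (B i).sel (p i) ∧ 0 < z.2 ∧
              ∀ qh ∈ (B t).P, z ∈ (B t).regionOf qh) ∧
            (∃ x, x ∈ (B i).sel (p i) ∧ x ∈ (B t).exter) := by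
          intro i hi
          have hpi : p i ∈ (B i).P := h1 i hi
          have hit : i < t := by rw [Fin.lt_def]; exact hi
          obtain ⟨hPFi, hSFi, hpreci, hmeeti, hseli, _⟩ := hbr i
          have hselSi : (B i).sel (p i) ∈ (B i).S := (hseli (p i) hpi).1
          have hselFi : (B i).sel (p i) ∈ F := hSFi hselSi
          obtain ⟨x, hxs, hxint⟩ := hext i ((B i).sel (p i)) hselSi
          have hxt : x ∈ (B t).exter := Set.mem_iInter₂.1 hxint t hit
          have hnot : (B i).sel (p i) ∉ (B t).P := by
            intro hmem
            exact hxt.1.2 ⟨(B i).sel (p i), Or.inl hmem, hxs⟩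
          have hSclosed : IsClosed (⋃₀ (B i).S) := bsc_sUnion_closed hF hSFi
          have hpig : IsGroundedCurve (p i) := hF.2.1 _ (hPFi hpi)
          have hSne : (p i ∩ ⋃₀ (B i).S).Nonempty := by
            obtain ⟨s, hsS, w, hw1, hw2⟩ := hmeeti (p i) hpi
            exact ⟨w, hw1, ⟨s, hsS, hw2⟩⟩
          have hzmem : firstPoint (p i) (⋃₀ (B i).S) ∈ p i :=
            bsc_firstPoint_mem hpig hSclosed hSne
          have hzsel : firstPoint (p i) (⋃₀ (B i).S) ∈ (B i).sel (p i) := (hseli (p i) hpi).2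
          have hzpos : 0 < (firstPoint (p i) (⋃₀ (B i).S)).2 := by
            have hzup : (0:ℝ) ≤ (firstPoint (p i) (⋃₀ (B i).S)).2 := hpig.2.1 hzmem
            rcases eq_or_lt_of_le hzup with h | h
            · exfalso
              have hpnesel : p i ≠ (B i).sel (p i) := by
                intro hh
                rcases hpreci with hp' | hp'
                · have := hp' (p i) hpi _ hselSi; rw [← hh] at this; exact lt_irrefl _ this
                · have := hp' (p i) hpi _ hselSi; rw [← hh] at this; exact lt_irrefl _ this
              have hb1 : firstPoint (p i) (⋃₀ (B i).S) = basepoint (p i) :=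
                bsc_basepoint_unique hpig hzmem h.symm
              have hb2 : firstPoint (p i) (⋃₀ (B i).S) = basepoint ((B i).sel (p i)) :=
                bsc_basepoint_unique (hF.2.1 _ hselFi) hzsel h.symm
              exact hF.2.2 _ (hPFi hpi) _ hselFi hpnesel (by rw [← hb1, ← hb2])
            · exact h
          have hreg : ∀ qh ∈ (B t).P,
              firstPoint (p i) (⋃₀ (B i).S) ∈ (B t).regionOf qh := by
            intro qh hqh
            have hsubint : p i ⊆ (B t).inter := hint i (p i) hpi t hit
            have hmem := hsubint hzmem
            rw [CBracket.inter] at hmem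
            exact Set.mem_iInter₂.1 hmem qh hqh
          exact ⟨hselFi, hnot, ⟨_, hzsel, hzpos, hreg⟩, ⟨x, hxs, hxt⟩⟩
        have hcover : ∃ qh ∈ (B t).P, ∀ i : Fin n, (i : ℕ) < m →
            (qh ∩ (B i).sel (p i)) = ∅ := by
          by_contra hno
          push_neg at hno
          set N : ℕ → Set (Set Pt) := fun iv =>
            if h : iv < m then
              {qh | qh ∈ (B t).P ∧
                (qh ∩ (B ⟨iv, h.trans hm⟩).sel (p ⟨iv, h.trans hm⟩)).Nonempty}
            else ∅ with hNdef
          have hcol : ∀ iv, iv < m → Colorable (N iv) ξ := by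
            intro iv hiv
            have hNsub : N iv ⊆ F := by
              intro c hc
              rw [hNdef] at hc; simp only [dif_pos hiv] at hc
              exact ((hbr t).1) hc.1
            have hfin : (N iv).Finite := hF.1.subset hNsub
            apply bsc_colorable_of_chi_le hfin
            obtain ⟨hsF, hsnotP, _, _⟩ := hfacts ⟨iv, hiv.trans hm⟩ hiv
            apply bsc_chi_class_le hF hk homega hind hsF
            · exact hNsub
            · intro hc
              rw [hNdef] at hc; simp only [dif_pos hiv] at hc
              exact hsnotP hc.1
            · intro qh hqh
              rw [hNdef] at hqh; simp only [dif_pos hiv] at hqh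
              exact hqh.2
          have hcovset : (B t).P ⊆ ⋃ iv ∈ Finset.range m, N iv := by
            intro qh hqh
            obtain ⟨i, hi, hne⟩ := hno qh hqh
            rw [Set.mem_iUnion₂]
            refine ⟨(i:ℕ), Finset.mem_range.2 hi, ?_⟩
            rw [hNdef]; simp only [dif_pos hi]
            refine ⟨hqh, ?_⟩
            have heqi : (⟨(i:ℕ), hi.trans hm⟩ : Fin n) = i := Fin.ext rfl
            rw [heqi]
            exact hne
          have hcolU := bsc_colorable_biUnion N ξ m hcol
          have hPcol : Colorable (B t).P (m * ξ) := bsc_colorable_subset hcolU hcovset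
          have hchile : chi (B t).P ≤ m * ξ := bsc_chi_le_of_colorable hPcol
          have hchit := hchi t
          have hmle : m * ξ ≤ (n - 1) * ξ := Nat.mul_le_mul_right ξ (by omega)
          exact absurd (hchile.trans hmle) (not_le.2 hchit)
        obtain ⟨qh, hqhP, hqhdisj⟩ := hcover
        have hnew : ∀ i : Fin n, (i : ℕ) < m →
            (((B i).sel (p i)) ∩ ((B t).sel qh)).Nonempty := by
          intro i hi
          obtain ⟨hsF, hsnotP, ⟨z, hzs, hz2, hreg⟩, ⟨x, hxs, hxt⟩⟩ := hfacts i hi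
          apply bsc_lemC hF (hbr t) hqhP hsF hzs hz2 (hreg qh hqhP) hxs hxt
          rw [Set.inter_comm]
          exact hqhdisj i hi
        refine ⟨Function.update p t qh, ?_, ?_⟩
        · intro i hi
          rcases Nat.lt_succ_iff_lt_or_eq.1 hi with h | h
          · have hne : i ≠ t := by
              intro hh; rw [hh] at h; exact absurd h (lt_irrefl m)
            rw [Function.update_of_ne hne]
            exact h1 i h
          · have hteq : i = t := Fin.ext h
            rw [hteq, Function.update_self]
            exact hqhP
        · intro i j hi hj hij
          rcases Nat.lt_succ_iff_lt_or_eq.1 hj with hjm | hjm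
          · have him : (i:ℕ) < m := lt_trans (Fin.lt_def.1 hij) hjm
            have hni : i ≠ t := by
              intro hh; rw [hh] at him; exact absurd him (lt_irrefl m)
            have hnj : j ≠ t := by
              intro hh; rw [hh] at hjm; exact absurd hjm (lt_irrefl m)
            rw [Function.update_of_ne hni, Function.update_of_ne hnj]
            exact h2 i j him hjm hij
          · have hjt : j = t := Fin.ext hjm
            have him : (i:ℕ) < m := by
              have hvlt := Fin.lt_def.1 hij
              omega
            have hni : i ≠ t := by
              intro hh; rw [hh] at him; exact absurd him (lt_irrefl m)
            rw [hjt, Function.update_of_ne hni, Function.update_self]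
            exact hnew i him
  obtain ⟨p, h1, h2⟩ := hclaim n (le_refl n)
  refine ⟨fun i => (B i).sel (p i), ?_, ?_⟩
  · intro i
    exact ((hbr i).2.2.2.2.1 (p i) (h1 i i.isLt)).1
  · intro i j hij
    rcases lt_or_gt_of_ne hij with h | h
    · exact h2 i j i.isLt j.isLt h
    · rw [Set.inter_comm]
      exact h2 j i j.isLt i.isLt h
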